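/- arXiv:1207.7233 — 3 statements merged into one kernel-verified Lean document; each statement's English description precedes it below -/
import Mathlib

section
/- Let R be a commutative Noetherian ring and M a finitely generated R-module such that every associated prime of M is a minimal prime over the annihilator ann(M). Assume that for every minimal prime P over ann(M), the localization (R/ann(M))_P is a reduced ring. Then ann(M) is a radical ideal, i.e., ann(M) equals the intersection of the minimal primes over it. -/
/-- Let `R` be a commutative Noetherian ring and `M` a finitely
generated `R`-module such that every associated prime of `M` is a minimal prime
over `ann(M)`.  Assume that for every minimal prime `P` over `ann(M)` the
localization `(R/ann(M))_P` is reduced.  Then `ann(M)` is a radical ideal, i.e.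
it equals the intersection of the minimal primes over it. -/
theorem stmt2 (R : Type*) [CommRing R] [IsNoetherianRing R]
    (M : Type*) [AddCommGroup M] [Module R M] [Module.Finite R M]
    (h1 : ∀ P ∈ associatedPrimes R M, P ∈ (Module.annihilator R M).minimalPrimes)
    (h2 : ∀ (P : Ideal R), P ∈ (Module.annihilator R M).minimalPrimes →
      ∀ (hQ : (P.map (Ideal.Quotient.mk (Module.annihilator R M))).IsPrime),
        IsReduced (@Localization.AtPrime (R ⧸ Module.annihilator R M) _
          (P.map (Ideal.Quotient.mk (Module.annihilator R M))) hQ)) :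
    Module.annihilator R M = sInf (Module.annihilator R M).minimalPrimes ∧
      (Module.annihilator R M).IsRadical := by
  set I : Ideal R := Module.annihilator R M with hI
  have hrad : I.radical ≤ I := by
    intro x hx
    -- show x annihilates M
    rw [hI, Module.mem_annihilator]
    by_contra hxm
    push_neg at hxm
    obtain ⟨m, hm⟩ := hxm
    -- get an associated prime containing the annihilator of x • m
    obtain ⟨P, hP, hPle⟩ := exists_le_isAssociatedPrime_of_isNoetherianRing R (x • m) hm
    have hPmin : P ∈ I.minimalPrimes := h1 P hP
    have hIP : I ≤ P := hPmin.1.2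
    -- the image of P in R ⧸ I is prime
    have hker : RingHom.ker (Ideal.Quotient.mk I) ≤ P := by
      rwa [Ideal.mk_ker]
    haveI hPprime : P.IsPrime := hPmin.1.1
    have hQ : (P.map (Ideal.Quotient.mk I)).IsPrime :=
      Ideal.map_isPrime_of_surjective Ideal.Quotient.mk_surjective hker
    haveI hred : IsReduced (@Localization.AtPrime (R ⧸ I) _
        (P.map (Ideal.Quotient.mk I)) hQ) := h2 P hPmin hQ
    -- the image of x in the localization is nilpotent, hence zero
    obtain ⟨n, hn⟩ := hx
    haveI := hQ
    have hnil : IsNilpotent (algebraMap (R ⧸ I)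
        (Localization.AtPrime (P.map (Ideal.Quotient.mk I)))
        (Ideal.Quotient.mk I x)) := by
      refine ⟨n, ?_⟩
      rw [← map_pow, ← map_pow, Ideal.Quotient.eq_zero_iff_mem.mpr hn, map_zero]
    have hzero : algebraMap (R ⧸ I)
        (Localization.AtPrime (P.map (Ideal.Quotient.mk I)))
        (Ideal.Quotient.mk I x) = 0 := hnil.eq_zero
    rw [IsLocalization.map_eq_zero_iff (P.map (Ideal.Quotient.mk I)).primeCompl] at hzero
    obtain ⟨⟨s, hs⟩, hsx⟩ := hzero
    obtain ⟨t, rfl⟩ := Ideal.Quotient.mk_surjective s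
    -- t * x ∈ I , so t annihilates x • m, so t ∈ P, contradiction
    have htx : t * x ∈ I := by
      rwa [← map_mul, Ideal.Quotient.eq_zero_iff_mem] at hsx
    have htP : t ∈ P := by
      have : t ∈ (Submodule.span R {x • m}).annihilator := by
        rw [Submodule.mem_annihilator_span_singleton, smul_smul]
        exact Module.mem_annihilator.mp htx m
      exact hPle (Submodule.mem_colon_singleton.mpr ((Submodule.mem_annihilator_span_singleton _ _).mp this))
    exact hs (Ideal.mem_map_of_mem _ htP)
  have hIsRad : I.IsRadical := hrad
  refine ⟨?_, hIsRad⟩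
  rw [Ideal.sInf_minimalPrimes, hIsRad.radical]
end

section
/- For every integer n ≥ 2, the number of tuples (k_1, ..., k_{n−1}) with each k_i ∈ {1, 2, ..., n−1} such that for all indices 1 ≤ r ≤ s ≤ n−1 the partial sum k_r + k_{r+1} + ... + k_s is not divisible by n, equals (n−1)!. -/
open scoped BigOperators

namespace Stmt6Aux

/-- Extension of `k : Fin m → ℕ` to `ℕ` by zero. -/
def kext (m : ℕ) (k : Fin m → ℕ) (t : ℕ) : ℕ := if h : t < m then k ⟨t, h⟩ else 0

/-- Prefix sums. -/
def pref (m : ℕ) (k : Fin m → ℕ) (t : ℕ) : ℕ := ∑ j ∈ Finset.range t, kext m k j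

lemma pref_succ (m : ℕ) (k : Fin m → ℕ) (t : ℕ) :
    pref m k (t + 1) = pref m k t + kext m k t := Finset.sum_range_succ _ _

lemma sum_Icc_eq {m : ℕ} (k : Fin m → ℕ) (r s : Fin m) :
    ∑ j ∈ Finset.Icc r s, k j = ∑ t ∈ Finset.Ico r.1 (s.1 + 1), kext m k t := by
  rw [Finset.Ico_add_one_right_eq_Icc, ← Fin.map_valEmbedding_Icc, Finset.sum_map]
  apply Finset.sum_congr rfl
  intro j _
  simp [kext, j.is_lt]

lemma pref_add {m : ℕ} (k : Fin m → ℕ) {r t : ℕ} (h : r ≤ t) :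
    pref m k r + ∑ j ∈ Finset.Ico r t, kext m k j = pref m k t := by
  unfold pref
  rw [Finset.range_eq_Ico, Finset.range_eq_Ico]
  exact Finset.sum_Ico_consecutive (fun j => kext m k j) (Nat.zero_le r) h

lemma dvd_iff {n m : ℕ} [NeZero n] (k : Fin m → ℕ) (r s : Fin m) (h : r ≤ s) :
    (n ∣ ∑ j ∈ Finset.Icc r s, k j) ↔
      ((pref m k (s.1 + 1) : ZMod n) = (pref m k r.1 : ZMod n)) := by
  have hrs : r.1 ≤ s.1 + 1 := by have := (Fin.le_def.mp h); omega
  have hp : ((pref m k r.1 : ℕ) : ZMod n) +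
      ((∑ j ∈ Finset.Ico r.1 (s.1 + 1), kext m k j : ℕ) : ZMod n)
      = ((pref m k (s.1 + 1) : ℕ) : ZMod n) := by
    rw [← Nat.cast_add, pref_add k hrs]
  rw [sum_Icc_eq, ← ZMod.natCast_eq_zero_iff _ n]
  constructor
  · intro h0
    rw [← hp, h0, add_zero]
  · intro he
    have : ((∑ j ∈ Finset.Ico r.1 (s.1 + 1), kext m k j : ℕ) : ZMod n)
        = ((pref m k (s.1 + 1) : ℕ) : ZMod n) - ((pref m k r.1 : ℕ) : ZMod n) := by
      rw [← hp]; ring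
    rw [this, he, sub_self]

lemma cast_val_eq {n : ℕ} [NeZero n] (x : ZMod n) : ((x.val : ℕ) : ZMod n) = x := by
  rw [ZMod.natCast_val, ZMod.cast_id]

end Stmt6Aux

open Stmt6Aux

/-- For every integer `n ≥ 2`, the number of tuples
`(k_1, …, k_{n-1})` with each `k_i ∈ {1, …, n-1}` such that no partial sum
`k_r + ⋯ + k_s` (for `1 ≤ r ≤ s ≤ n-1`) is divisible by `n`, equals `(n-1)!`. -/
theorem stmt6 (n : ℕ) (hn : 2 ≤ n) :
    Nat.card {k : Fin (n - 1) → ℕ //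
        (∀ i, k i ∈ Finset.Icc 1 (n - 1)) ∧
        ∀ r s : Fin (n - 1), r ≤ s → ¬ (n ∣ ∑ i ∈ Finset.Icc r s, k i)} =
      Nat.factorial (n - 1) := by
  haveI : NeZero n := ⟨by omega⟩
  set m := n - 1 with hmdef
  have hm1 : 1 ≤ m := by omega
  have hmn : m + 1 = n := by omega
  set K := {k : Fin m → ℕ //
      (∀ i, k i ∈ Finset.Icc 1 (n - 1)) ∧
      ∀ r s : Fin m, r ≤ s → ¬ (n ∣ ∑ i ∈ Finset.Icc r s, k i)} with hK
  set T := {g : Fin m → ZMod n // Function.Injective g ∧ ∀ i, g i ≠ 0} with hT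
  -- the forward map
  have pref_zero : ∀ k : Fin m → ℕ, pref m k 0 = 0 := fun k => rfl
  let Φ : K → T := fun k => by
    refine ⟨fun i => ((pref m k.1 (i.1 + 1) : ℕ) : ZMod n), ?_, ?_⟩
    · intro i j hij
      by_contra hne
      rcases Ne.lt_or_gt (fun h : i = j => hne h) with hlt | hlt
      · have hr : i.1 + 1 < m := by have := Fin.lt_def.mp hlt; omega
        have := k.2.2 ⟨i.1 + 1, hr⟩ j (by rw [Fin.le_def]; have := Fin.lt_def.mp hlt; simpa using this)
        rw [dvd_iff] at this
        exact this (by simpa using hij.symm)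
        · rw [Fin.le_def]; have := Fin.lt_def.mp hlt; simpa using this
      · have hr : j.1 + 1 < m := by have := Fin.lt_def.mp hlt; omega
        have := k.2.2 ⟨j.1 + 1, hr⟩ i (by rw [Fin.le_def]; have := Fin.lt_def.mp hlt; simpa using this)
        rw [dvd_iff] at this
        exact this (by simpa using hij)
        · rw [Fin.le_def]; have := Fin.lt_def.mp hlt; simpa using this
    · intro i
      have := k.2.2 ⟨0, by omega⟩ i (by rw [Fin.le_def]; simp)
      rw [dvd_iff _ _ _ (by rw [Fin.le_def]; simp)] at this
      simpa [pref_zero] using this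
  have hΦinj : Function.Injective Φ := by
    intro k k' h
    have hall : ∀ t : ℕ, ((pref m k.1 t : ℕ) : ZMod n) = ((pref m k'.1 t : ℕ) : ZMod n) := by
      intro t
      rcases Nat.eq_zero_or_pos t with h0 | hpos
      · simp [h0, pref_zero]
      · rcases Nat.lt_or_ge t (m + 1) with hlt | hge
        · have ht : t - 1 < m := by omega
          have := congrArg (fun f => f.1 ⟨t - 1, ht⟩) h
          simpa [Φ, Nat.sub_add_cancel hpos] using this
        · -- t ≥ m + 1 : pref stabilizes at pref m
          have hstab : ∀ (kk : Fin m → ℕ) (u : ℕ), m ≤ u → pref m kk u = pref m kk m := by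
            intro kk u hu
            induction u with
            | zero => omega
            | succ v ih =>
              rcases Nat.lt_or_ge v m with hv | hv
              · have : v + 1 = m := by omega
                rw [this]
              · rw [pref_succ, ih hv]
                simp [kext, Nat.not_lt.mpr hv]
          rw [hstab k.1 t (by omega), hstab k'.1 t (by omega)]
          have := congrArg (fun f => f.1 ⟨m - 1, by omega⟩) h
          have hm' : m - 1 + 1 = m := by omega
          simpa [Φ, hm'] using this
    apply Subtype.ext
    funext i
    have h1 := hall (i.1 + 1)
    have h2 := hall i.1
    rw [pref_succ, pref_succ, Nat.cast_add, Nat.cast_add, h2] at h1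
    have hcast : ((kext m k.1 i.1 : ℕ) : ZMod n) = ((kext m k'.1 i.1 : ℕ) : ZMod n) := by
      exact add_left_cancel h1
    have hk : kext m k.1 i.1 = k.1 i := by simp [kext, i.is_lt]
    have hk' : kext m k'.1 i.1 = k'.1 i := by simp [kext, i.is_lt]
    rw [hk, hk'] at hcast
    have hb1 := k.2.1 i
    have hb2 := k'.2.1 i
    rw [Finset.mem_Icc] at hb1 hb2
    have hlt1 : k.1 i < n := by omega
    have hlt2 : k'.1 i < n := by omega
    have := congrArg ZMod.val hcast
    rwa [ZMod.val_cast_of_lt hlt1, ZMod.val_cast_of_lt hlt2] at this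
  have hΦsurj : Function.Surjective Φ := by
    rintro ⟨g, hginj, hg0⟩
    -- the previous value
    set P : Fin m → ZMod n := fun i => if h : 0 < i.1 then g ⟨i.1 - 1, by omega⟩ else 0 with hP
    have hne : ∀ i, g i - P i ≠ 0 := by
      intro i
      rw [sub_ne_zero]
      by_cases h : 0 < i.1
      · simp only [hP, dif_pos h]
        intro heq
        have := hginj heq
        have := congrArg Fin.val this
        simp at this
        omega
      · simp only [hP, dif_neg h]
        exact hg0 i
    set k : Fin m → ℕ := fun i => (g i - P i).val with hk
    have hbound : ∀ i, k i ∈ Finset.Icc 1 (n - 1) := by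
      intro i
      rw [Finset.mem_Icc]
      have hv : k i = (g i - P i).val := rfl
      rw [hv]
      constructor
      · have : (g i - P i).val ≠ 0 := by
          intro h
          exact hne i ((ZMod.val_eq_zero _).mp h)
        omega
      · have := ZMod.val_lt (g i - P i)
        omega
    have key : ∀ (t : ℕ) (h : t < m), ((pref m k (t + 1) : ℕ) : ZMod n) = g ⟨t, h⟩ := by
      intro t
      induction t with
      | zero =>
        intro h
        rw [pref_succ, pref_zero, zero_add]
        have : kext m k 0 = k ⟨0, h⟩ := by simp [kext, h]
        rw [this, hk]
        simp only
        rw [cast_val_eq]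
        have : P ⟨0, h⟩ = 0 := by simp [hP]
        rw [this, sub_zero]
      | succ t ih =>
        intro h
        rw [pref_succ, Nat.cast_add, ih (by omega)]
        have : kext m k (t + 1) = k ⟨t + 1, h⟩ := by simp [kext, h]
        rw [this, hk]
        simp only
        rw [cast_val_eq]
        have hPv : P ⟨t + 1, h⟩ = g ⟨t, by omega⟩ := by simp [hP]
        rw [hPv]
        ring
    refine ⟨⟨k, hbound, ?_⟩, ?_⟩
    · intro r s hrs
      rw [dvd_iff _ _ _ hrs]
      rw [key s.1 s.is_lt]
      by_cases h : 0 < r.1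
      · have hr1 : r.1 - 1 < m := by omega
        have : ((pref m k r.1 : ℕ) : ZMod n) = g ⟨r.1 - 1, hr1⟩ := by
          have h' : r.1 - 1 + 1 = r.1 := by omega
          have hkk := key (r.1 - 1) hr1
          rwa [h'] at hkk
        rw [this]
        intro heq
        have := hginj heq
        have := congrArg Fin.val this
        simp at this
        have := Fin.le_def.mp hrs
        omega
      · have hr0 : r.1 = 0 := by omega
        rw [hr0]
        simp only [pref_zero, Nat.cast_zero]
        exact hg0 s
    · apply Subtype.ext
      funext i
      exact key i.1 i.is_lt
  have h1 : Nat.card K = Nat.card T := Nat.card_eq_of_bijective Φ ⟨hΦinj, hΦsurj⟩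
  -- T is equivalent to embeddings into nonzero elements
  let e : T ≃ (Fin m ↪ {x : ZMod n // x ≠ 0}) :=
    { toFun := fun g => ⟨fun i => ⟨g.1 i, g.2.2 i⟩, fun i j hij =>
        g.2.1 (congrArg Subtype.val hij)⟩
      invFun := fun f => ⟨fun i => (f i).1, fun i j hij => f.injective (Subtype.ext hij),
        fun i => (f i).2⟩
      left_inv := fun g => rfl
      right_inv := fun f => rfl }
  have h2 : Nat.card T = Fintype.card (Fin m ↪ {x : ZMod n // x ≠ 0}) := by
    rw [Nat.card_congr e, Nat.card_eq_fintype_card]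
  have hcard : Fintype.card {x : ZMod n // x ≠ 0} = m := by
    have : Fintype.card {x : ZMod n // x ≠ 0} = Fintype.card (ZMod n) - 1 := by
      rw [Fintype.card_subtype_compl, Fintype.card_subtype_eq]
    rw [this, ZMod.card]
  rw [h1, h2, Fintype.card_embedding_eq, hcard, Fintype.card_fin,
    Nat.descFactorial_self]
end

section
/- Let n ≥ 2 and consider in ℝ^{n−1} the (countable) family of hyperplanes H_{r,s,m} = {x : x_r + x_{r+1} + ... + x_s = m} for 1 ≤ r ≤ s ≤ n−1 and m ∈ ℤ. Only finitely many of these hyperplanes meet the open cube (0,1)^{n−1}, and the complement in (0,1)^{n−1} of their union has exactly (n−1)! connected components. -/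
open scoped BigOperators

namespace Stmt17

open Finset

variable {N : ℕ}

/-- Partial sum of the first `k` coordinates. -/
def Zs (x : Fin N → ℝ) (k : ℕ) : ℝ :=
  ∑ i ∈ Finset.univ.filter (fun i : Fin N => (i : ℕ) < k), x i

/-- Fractional parts of the partial sums. -/
noncomputable def Ff (x : Fin N → ℝ) (j : Fin N) : ℝ := Int.fract (Zs x ((j : ℕ) + 1))

/-- The region in the statement. -/
def Sset (N : ℕ) : Set (Fin N → ℝ) :=
  {x : Fin N → ℝ | (∀ i, 0 < x i ∧ x i < 1) ∧
    ∀ r s : Fin N, r ≤ s → ∀ m : ℤ, (∑ i ∈ Finset.Icc r s, x i) ≠ m}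

/-- The chamber associated to a permutation. -/
def Cham (σ : Equiv.Perm (Fin N)) : Set (Fin N → ℝ) :=
  {x | (∀ i, 0 < x i ∧ x i < 1) ∧ (∀ j, 0 < Ff x j) ∧
    StrictMono (fun k => Ff x (σ k))}

lemma Zs_zero (x : Fin N → ℝ) : Zs x 0 = 0 := by simp [Zs]

lemma Zs_succ (x : Fin N → ℝ) {k : ℕ} (hk : k < N) :
    Zs x (k + 1) = Zs x k + x ⟨k, hk⟩ := by
  unfold Zs
  have h : Finset.univ.filter (fun i : Fin N => (i : ℕ) < k + 1) =
      insert ⟨k, hk⟩ (Finset.univ.filter (fun i : Fin N => (i : ℕ) < k)) := by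
    ext i
    simp only [Finset.mem_filter, Finset.mem_univ, true_and, Finset.mem_insert, Fin.ext_iff]
    omega
  rw [h, Finset.sum_insert (by simp)]
  ring

lemma sum_Icc_eq (x : Fin N → ℝ) {r s : Fin N} (h : r ≤ s) :
    (∑ i ∈ Finset.Icc r s, x i) = Zs x ((s : ℕ) + 1) - Zs x (r : ℕ) := by
  have hsub : Finset.univ.filter (fun i : Fin N => (i : ℕ) < (r : ℕ)) ⊆
      Finset.univ.filter (fun i : Fin N => (i : ℕ) < (s : ℕ) + 1) := by
    intro i hi
    simp only [Finset.mem_filter, Finset.mem_univ, true_and] at hi ⊢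
    have := Fin.le_def.1 h
    omega
  have hIcc : Finset.Icc r s =
      Finset.univ.filter (fun i : Fin N => (i : ℕ) < (s : ℕ) + 1) \
      Finset.univ.filter (fun i : Fin N => (i : ℕ) < (r : ℕ)) := by
    ext i
    simp only [Finset.mem_Icc, Finset.mem_sdiff, Finset.mem_filter, Finset.mem_univ, true_and,
      Fin.le_def]
    omega
  rw [hIcc, Finset.sum_sdiff_eq_sub hsub]
  rfl

lemma Zs_linear (x y : Fin N → ℝ) (a b : ℝ) (k : ℕ) :
    Zs (a • x + b • y) k = a * Zs x k + b * Zs y k := by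
  simp [Zs, Finset.mul_sum, Finset.sum_add_distrib, mul_comm]

lemma mem_Sset_iff (x : Fin N → ℝ) :
    x ∈ Sset N ↔ (∀ i, 0 < x i ∧ x i < 1) ∧ (∀ j, Ff x j ≠ 0) ∧
      Function.Injective (Ff x) := by
  constructor
  · rintro ⟨hc, hS⟩
    refine ⟨hc, ?_, ?_⟩
    · intro j hj
      have h0N : (0 : ℕ) < N := lt_of_le_of_lt (Nat.zero_le _) j.isLt
      have hz : Zs x (((⟨0, h0N⟩ : Fin N) : ℕ)) = 0 := Zs_zero x
      have hfr : Zs x ((j : ℕ) + 1) = (⌊Zs x ((j : ℕ) + 1)⌋ : ℝ) := by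
        have := Int.self_sub_floor (Zs x ((j : ℕ) + 1))
        rw [show Int.fract (Zs x ((j : ℕ) + 1)) = Ff x j from rfl, hj] at this
        linarith
      refine hS ⟨0, h0N⟩ j (Fin.le_def.2 (Nat.zero_le _)) ⌊Zs x ((j : ℕ) + 1)⌋ ?_
      rw [sum_Icc_eq x (Fin.le_def.2 (Nat.zero_le _)), hz, sub_zero]
      exact hfr
    · have key : ∀ i j : Fin N, (i : ℕ) < (j : ℕ) → Ff x i ≠ Ff x j := by
        intro i j hij hEq
        obtain ⟨z, hz⟩ := Int.fract_eq_fract.1 hEq.symm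
        have hi1 : (i : ℕ) + 1 < N := lt_of_le_of_lt hij j.isLt
        have hle : (⟨(i : ℕ) + 1, hi1⟩ : Fin N) ≤ j := by
          simp only [Fin.le_def, Fin.val_mk]
          omega
        refine hS ⟨(i : ℕ) + 1, hi1⟩ j hle z ?_
        rw [sum_Icc_eq x hle]
        exact hz
      intro i j hEq
      rcases lt_trichotomy (i : ℕ) (j : ℕ) with h | h | h
      · exact absurd hEq (key i j h)
      · exact Fin.ext h
      · exact absurd hEq.symm (key j i h)
  · rintro ⟨hc, hne, hinj⟩
    refine ⟨hc, ?_⟩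
    rintro ⟨rv, hr⟩ s hrs m hsum
    rw [sum_Icc_eq x hrs] at hsum
    rcases Nat.eq_zero_or_pos rv with rfl | hrv
    · rw [show ((⟨0, hr⟩ : Fin N) : ℕ) = 0 from rfl, Zs_zero, sub_zero] at hsum
      apply hne s
      rw [Ff, hsum, Int.fract_intCast]
    · obtain ⟨rv', rfl⟩ : ∃ rv', rv = rv' + 1 := ⟨rv - 1, by omega⟩
      have hrv' : rv' < N := by omega
      have hEq : Ff x s = Ff x ⟨rv', hrv'⟩ :=
        Int.fract_eq_fract.2 ⟨m, by simpa using hsum⟩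
      have := hinj hEq
      have hval : (s : ℕ) = rv' := by
        simpa [Fin.ext_iff] using this
      have := Fin.le_def.1 hrs
      simp only at this
      omega

lemma Cham_injective {σ : Equiv.Perm (Fin N)} {x : Fin N → ℝ} (hx : x ∈ Cham σ) :
    Function.Injective (Ff x) := by
  intro a b h
  have h' : (fun k => Ff x (σ k)) (σ.symm a) = (fun k => Ff x (σ k)) (σ.symm b) := by
    simpa [Equiv.apply_symm_apply] using h
  have := hx.2.2.injective h'
  simpa using congrArg σ this

lemma Cham_subset (σ : Equiv.Perm (Fin N)) : Cham σ ⊆ Sset N := by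
  intro x hx
  exact (mem_Sset_iff x).2 ⟨hx.1, fun j => (hx.2.1 j).ne', Cham_injective hx⟩

lemma mem_Cham_sort {x : Fin N → ℝ} (hx : x ∈ Sset N) :
    x ∈ Cham (Tuple.sort (Ff x)) := by
  obtain ⟨hc, hne, hinj⟩ := (mem_Sset_iff x).1 hx
  refine ⟨hc, fun j => lt_of_le_of_ne (Int.fract_nonneg _) (Ne.symm (hne j)), ?_⟩
  have hmono : Monotone (Ff x ∘ Tuple.sort (Ff x)) := Tuple.monotone_sort (Ff x)
  exact hmono.strictMono_of_injective (hinj.comp (Equiv.injective _))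

lemma Cham_disjoint {σ τ : Equiv.Perm (Fin N)} {x : Fin N → ℝ}
    (hσ : x ∈ Cham σ) (hτ : x ∈ Cham τ) : σ = τ := by
  have h1 : Ff x ∘ σ = Ff x ∘ τ :=
    Tuple.unique_monotone hσ.2.2.monotone hτ.2.2.monotone
  apply Equiv.ext
  intro k
  exact Cham_injective hσ (congrFun h1 k)

lemma Ff_lt_iff {σ : Equiv.Perm (Fin N)} {x : Fin N → ℝ} (hx : x ∈ Cham σ)
    (j k : Fin N) : Ff x j < Ff x k ↔ σ.symm j < σ.symm k := by
  have := hx.2.2.lt_iff_lt (a := σ.symm j) (b := σ.symm k)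
  simpa [Equiv.apply_symm_apply] using this

lemma floor_Zs_eq {σ : Equiv.Perm (Fin N)} {x x' : Fin N → ℝ}
    (hx : x ∈ Cham σ) (hx' : x' ∈ Cham σ) :
    ∀ k, k < N → ⌊Zs x (k + 1)⌋ = ⌊Zs x' (k + 1)⌋ := by
  have key : ∀ (y : Fin N → ℝ), y ∈ Cham σ → ∀ k (hk : k < N) (hk1 : k + 1 < N),
      ⌊Zs y (k + 2)⌋ = ⌊Zs y (k + 1)⌋ +
        (if σ.symm ⟨k + 1, hk1⟩ < σ.symm ⟨k, hk⟩ then 1 else 0) := by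
    intro y hy k hk hk1
    set a := ⌊Zs y (k + 1)⌋ with ha
    set b := ⌊Zs y (k + 2)⌋ with hb
    have h1 : Ff y ⟨k, hk⟩ = Zs y (k + 1) - a := (Int.self_sub_floor _).symm
    have h2 : Ff y ⟨k + 1, hk1⟩ = Zs y (k + 2) - b := (Int.self_sub_floor _).symm
    have hstep : Zs y (k + 2) = Zs y (k + 1) + y ⟨k + 1, hk1⟩ := Zs_succ y hk1
    have hy1 := hy.1 ⟨k + 1, hk1⟩
    have hp1 : 0 < Ff y ⟨k, hk⟩ := hy.2.1 _
    have hp2 : 0 < Ff y ⟨k + 1, hk1⟩ := hy.2.1 _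
    have hq1 : Ff y ⟨k, hk⟩ < 1 := Int.fract_lt_one _
    have hq2 : Ff y ⟨k + 1, hk1⟩ < 1 := Int.fract_lt_one _
    have hdiff : (b : ℝ) - a = y ⟨k + 1, hk1⟩ - Ff y ⟨k + 1, hk1⟩ + Ff y ⟨k, hk⟩ := by
      rw [h1, h2, hstep]; ring
    rcases lt_or_ge (σ.symm ⟨k + 1, hk1⟩) (σ.symm ⟨k, hk⟩) with hlt | hle
    · rw [if_pos hlt]
      have hFlt : Ff y ⟨k + 1, hk1⟩ < Ff y ⟨k, hk⟩ := (Ff_lt_iff hy _ _).2 hlt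
      have hlo : (0 : ℝ) < (b : ℝ) - a := by rw [hdiff]; linarith
      have hhi : (b : ℝ) - a < 2 := by rw [hdiff]; linarith
      have hlo' : (0 : ℤ) < b - a := by exact_mod_cast (by push_cast; linarith : (0:ℝ) < ((b - a : ℤ) : ℝ))
      have hhi' : b - a < 2 := by exact_mod_cast (by push_cast; linarith : ((b - a : ℤ) : ℝ) < 2)
      omega
    · have hne : σ.symm ⟨k, hk⟩ ≠ σ.symm ⟨k + 1, hk1⟩ := by
        intro h
        have : (⟨k, hk⟩ : Fin N) = ⟨k + 1, hk1⟩ := σ.symm.injective h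
        simp [Fin.ext_iff] at this
      have hlt' : σ.symm ⟨k, hk⟩ < σ.symm ⟨k + 1, hk1⟩ := lt_of_le_of_ne hle (Ne.symm ?_)
      swap
      · exact fun h => hne h.symm
      rw [if_neg (not_lt.2 hle)]
      have hFlt : Ff y ⟨k, hk⟩ < Ff y ⟨k + 1, hk1⟩ := (Ff_lt_iff hy _ _).2 hlt'
      have hlo : (-1 : ℝ) < (b : ℝ) - a := by rw [hdiff]; linarith
      have hhi : (b : ℝ) - a < 1 := by rw [hdiff]; linarith
      have hlo' : (-1 : ℤ) < b - a := by exact_mod_cast (by push_cast; linarith : (-1:ℝ) < ((b - a : ℤ) : ℝ))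
      have hhi' : b - a < 1 := by exact_mod_cast (by push_cast; linarith : ((b - a : ℤ) : ℝ) < 1)
      omega
  intro k
  induction k with
  | zero =>
    intro h0
    have e1 : Zs x 1 = x ⟨0, h0⟩ := by rw [show (1:ℕ) = 0 + 1 from rfl, Zs_succ x h0, Zs_zero]; ring
    have e2 : Zs x' 1 = x' ⟨0, h0⟩ := by rw [show (1:ℕ) = 0 + 1 from rfl, Zs_succ x' h0, Zs_zero]; ring
    have f1 : ⌊Zs x 1⌋ = 0 := by
      rw [e1]; exact Int.floor_eq_iff.2 ⟨by simpa using (hx.1 ⟨0, h0⟩).1.le, by simpa using (hx.1 ⟨0, h0⟩).2⟩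
    have f2 : ⌊Zs x' 1⌋ = 0 := by
      rw [e2]; exact Int.floor_eq_iff.2 ⟨by simpa using (hx'.1 ⟨0, h0⟩).1.le, by simpa using (hx'.1 ⟨0, h0⟩).2⟩
    rw [f1, f2]
  | succ k ih =>
    intro hk1
    have hk : k < N := by omega
    rw [show k + 1 + 1 = k + 2 from rfl, key x hx k hk hk1, key x' hx' k hk hk1, ih hk]

lemma combo_lt {a b p q p' q' : ℝ} (ha : 0 ≤ a) (hb : 0 ≤ b) (hab : a + b = 1)
    (h1 : p < p') (h2 : q < q') : a * p + b * q < a * p' + b * q' := by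
  rcases ha.lt_or_eq with ha' | ha'
  · have h3 : a * p < a * p' := by nlinarith
    have h4 : b * q ≤ b * q' := by nlinarith
    linarith
  · have hb1 : b = 1 := by linarith
    rw [← ha', hb1]
    ring_nf
    linarith

lemma Cham_convex (σ : Equiv.Perm (Fin N)) : Convex ℝ (Cham σ) := by
  intro x hx y hy a b ha hb hab
  have hfl := floor_Zs_eq hx hy
  have hZ : ∀ k, Zs (a • x + b • y) k = a * Zs x k + b * Zs y k := Zs_linear x y a b
  have hfloor : ∀ j : Fin N, ⌊Zs (a • x + b • y) ((j : ℕ) + 1)⌋ = ⌊Zs x ((j : ℕ) + 1)⌋ := by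
    intro j
    have hj := j.isLt
    set A := ⌊Zs x ((j : ℕ) + 1)⌋ with hA
    have hx1 : (A : ℝ) < Zs x ((j : ℕ) + 1) := by
      have := hx.2.1 j
      rw [Ff, ← Int.self_sub_floor] at this
      linarith
    have hx2 : Zs x ((j : ℕ) + 1) < A + 1 := Int.lt_floor_add_one _
    have hy1 : (A : ℝ) < Zs y ((j : ℕ) + 1) := by
      have := hy.2.1 j
      rw [Ff, ← Int.self_sub_floor] at this
      rw [hA, hfl _ hj]
      linarith
    have hy2 : Zs y ((j : ℕ) + 1) < A + 1 := by
      rw [hA, hfl _ hj]; exact Int.lt_floor_add_one _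
    have hA1 : a * (A : ℝ) + b * (A : ℝ) = A := by rw [← add_mul, hab, one_mul]
    have hA2 : a * ((A : ℝ) + 1) + b * ((A : ℝ) + 1) = (A : ℝ) + 1 := by
      rw [← add_mul, hab, one_mul]
    refine Int.floor_eq_iff.2 ⟨?_, ?_⟩
    · rw [hZ]
      have := combo_lt ha hb hab hx1 hy1
      linarith
    · rw [hZ]
      have := combo_lt ha hb hab hx2 hy2
      linarith
  have hFf : ∀ j, Ff (a • x + b • y) j = a * Ff x j + b * Ff y j := by
    intro j
    have hj := j.isLt
    have e : ((⌊Zs (a • x + b • y) ((j : ℕ) + 1)⌋ : ℤ) : ℝ) = ((⌊Zs x ((j : ℕ) + 1)⌋ : ℤ) : ℝ) := by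
      rw [hfloor j]
    have ey : ((⌊Zs y ((j : ℕ) + 1)⌋ : ℤ) : ℝ) = ((⌊Zs x ((j : ℕ) + 1)⌋ : ℤ) : ℝ) := by
      rw [hfl _ hj]
    simp only [Ff, ← Int.self_sub_floor]
    rw [e, ey, hZ]
    linear_combination ((⌊Zs x ((j : ℕ) + 1)⌋ : ℤ) : ℝ) * hab
  refine ⟨?_, ?_, ?_⟩
  · intro i
    have h3 : (a • x + b • y) i = a * x i + b * y i := by simp
    have hlo := combo_lt ha hb hab (hx.1 i).1 (hy.1 i).1
    have hhi := combo_lt ha hb hab (hx.1 i).2 (hy.1 i).2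
    rw [h3]
    constructor
    · simpa using hlo
    · have : a * x i + b * y i < a * 1 + b * 1 := hhi
      rw [mul_one, mul_one, hab] at this
      exact this
  · intro j
    rw [hFf j]
    simpa using combo_lt ha hb hab (hx.2.1 j) (hy.2.1 j)
  · intro k k' hkk
    simp only [hFf]
    exact combo_lt ha hb hab (hx.2.2 hkk) (hy.2.2 hkk)

lemma Zs_continuous (k : ℕ) : Continuous fun w : Fin N → ℝ => Zs w k :=
  continuous_finset_sum _ fun i _ => continuous_apply i

lemma Cham_open (σ : Equiv.Perm (Fin N)) : IsOpen (Cham σ) := by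
  rw [isOpen_iff_forall_mem_open]
  intro x hx
  set A : Fin N → ℤ := fun j => ⌊Zs x ((j : ℕ) + 1)⌋ with hA
  refine ⟨({w | ∀ i, 0 < w i ∧ w i < 1} ∩
      {w | ∀ j : Fin N, (A j : ℝ) < Zs w ((j : ℕ) + 1) ∧ Zs w ((j : ℕ) + 1) < A j + 1} ∩
      {w | ∀ k k' : Fin N, k < k' →
        Zs w (((σ k : Fin N) : ℕ) + 1) - A (σ k) < Zs w (((σ k' : Fin N) : ℕ) + 1) - A (σ k')}),
      ?_, ?_, ?_⟩
  · rintro w ⟨⟨hw1, hw2⟩, hw3⟩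
    have hfl : ∀ j : Fin N, ⌊Zs w ((j : ℕ) + 1)⌋ = A j :=
      fun j => Int.floor_eq_iff.2 ⟨(hw2 j).1.le, (hw2 j).2⟩
    have hFf : ∀ j, Ff w j = Zs w ((j : ℕ) + 1) - A j := by
      intro j
      rw [Ff, ← Int.self_sub_floor, hfl j]
    refine ⟨hw1, fun j => by rw [hFf]; linarith [(hw2 j).1], ?_⟩
    intro k k' h
    simp only [hFf]
    exact hw3 k k' h
  · apply IsOpen.inter
    apply IsOpen.inter
    · rw [Set.setOf_forall]
      refine isOpen_iInter_of_finite fun i => ?_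
      rw [Set.setOf_and]
      exact (isOpen_lt continuous_const (continuous_apply i)).inter
        (isOpen_lt (continuous_apply i) continuous_const)
    · rw [Set.setOf_forall]
      refine isOpen_iInter_of_finite fun j => ?_
      rw [Set.setOf_and]
      exact (isOpen_lt continuous_const (Zs_continuous _)).inter
        (isOpen_lt (Zs_continuous _) continuous_const)
    · rw [Set.setOf_forall]
      refine isOpen_iInter_of_finite fun k => ?_
      rw [Set.setOf_forall]
      refine isOpen_iInter_of_finite fun k' => ?_
      by_cases h : k < k'
      · have : {w : Fin N → ℝ | k < k' →
            Zs w (((σ k : Fin N) : ℕ) + 1) - A (σ k) < Zs w (((σ k' : Fin N) : ℕ) + 1) - A (σ k')} =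
            {w : Fin N → ℝ |
            Zs w (((σ k : Fin N) : ℕ) + 1) - A (σ k) < Zs w (((σ k' : Fin N) : ℕ) + 1) - A (σ k')} := by
          ext w; simp [h]
        rw [this]
        exact isOpen_lt ((Zs_continuous _).sub continuous_const)
          ((Zs_continuous _).sub continuous_const)
      · have : {w : Fin N → ℝ | k < k' →
            Zs w (((σ k : Fin N) : ℕ) + 1) - A (σ k) < Zs w (((σ k' : Fin N) : ℕ) + 1) - A (σ k')} =
            Set.univ := by
          ext w; simp [h]
        rw [this]
        exact isOpen_univ
  · have hFf : ∀ j, Ff x j = Zs x ((j : ℕ) + 1) - A j := by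
      intro j
      rw [Ff, ← Int.self_sub_floor]
    refine ⟨⟨hx.1, ?_⟩, ?_⟩
    · intro j
      constructor
      · have := hx.2.1 j
        rw [hFf] at this
        linarith
      · exact Int.lt_floor_add_one _
    · intro k k' h
      have := hx.2.2 h
      simp only [hFf] at this
      exact this

section Nonempty

variable (σ : Equiv.Perm (Fin N))

/-- Target fractional values. -/
noncomputable def ffrac (k : ℕ) : ℝ :=
  if h : k < N then ((σ.symm ⟨k, h⟩ : ℕ) + 1 : ℝ) / (N + 1) else 0

/-- Accumulated integer offsets. -/
noncomputable def Aacc : ℕ → ℤ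
  | 0 => 0
  | k + 1 => Aacc k + (if ffrac σ (k + 1) < ffrac σ k then 1 else 0)

/-- Target partial sums. -/
noncomputable def ee (k : ℕ) : ℝ :=
  if k = 0 then 0 else ffrac σ (k - 1) + Aacc σ (k - 1)

/-- The chosen point in the chamber of `σ`. -/
noncomputable def pt : Fin N → ℝ := fun j => ee σ ((j : ℕ) + 1) - ee σ (j : ℕ)

lemma ffrac_pos {k : ℕ} (hk : k < N) : 0 < ffrac σ k := by
  rw [ffrac, dif_pos hk]
  positivity

lemma ffrac_lt_one {k : ℕ} (hk : k < N) : ffrac σ k < 1 := by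
  rw [ffrac, dif_pos hk]
  rw [div_lt_one (by positivity)]
  have : ((σ.symm ⟨k, hk⟩ : Fin N) : ℕ) < N := (σ.symm ⟨k, hk⟩).isLt
  push_cast
  exact_mod_cast by omega
  
lemma ffrac_ne {k k' : ℕ} (hk : k < N) (hk' : k' < N) (h : k ≠ k') :
    ffrac σ k ≠ ffrac σ k' := by
  rw [ffrac, dif_pos hk, ffrac, dif_pos hk']
  intro hEq
  rw [div_eq_div_iff (by positivity) (by positivity)] at hEq
  have hc : (((σ.symm ⟨k, hk⟩ : Fin N) : ℕ) : ℝ) + 1 = (((σ.symm ⟨k', hk'⟩ : Fin N) : ℕ) : ℝ) + 1 :=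
    mul_right_cancel₀ (by positivity) hEq
  have h2 : ((σ.symm ⟨k, hk⟩ : Fin N) : ℕ) = ((σ.symm ⟨k', hk'⟩ : Fin N) : ℕ) := by
    exact_mod_cast (by linarith :
      ((((σ.symm ⟨k, hk⟩ : Fin N) : ℕ)) : ℝ) = (((σ.symm ⟨k', hk'⟩ : Fin N) : ℕ) : ℝ))
  have : σ.symm ⟨k, hk⟩ = σ.symm ⟨k', hk'⟩ := Fin.ext h2
  have := σ.symm.injective this
  simp [Fin.ext_iff] at this
  exact h this

lemma Zs_telescope (e : ℕ → ℝ) (h0 : e 0 = 0) :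
    ∀ k, k ≤ N → Zs (fun j : Fin N => e ((j : ℕ) + 1) - e (j : ℕ)) k = e k := by
  intro k
  induction k with
  | zero => intro _; rw [Zs_zero, h0]
  | succ k ih =>
    intro hk
    have hkN : k < N := hk
    rw [Zs_succ _ hkN, ih (le_of_lt hkN)]
    simp

lemma Zs_pt (j : Fin N) : Zs (pt σ) ((j : ℕ) + 1) = ffrac σ (j : ℕ) + Aacc σ (j : ℕ) := by
  have h := Zs_telescope (N := N) (ee σ) (by simp [ee]) ((j : ℕ) + 1) j.isLt
  show Zs (fun j : Fin N => ee σ ((j : ℕ) + 1) - ee σ (j : ℕ)) ((j : ℕ) + 1) =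
    ffrac σ (j : ℕ) + Aacc σ (j : ℕ)
  rw [h]
  simp [ee]

lemma Ff_pt (j : Fin N) : Ff (pt σ) j = ffrac σ (j : ℕ) := by
  rw [Ff, Zs_pt, Int.fract_add_intCast]
  exact Int.fract_eq_self.2 ⟨(ffrac_pos σ j.isLt).le, ffrac_lt_one σ j.isLt⟩

lemma pt_mem : pt σ ∈ Cham σ := by
  refine ⟨?_, ?_, ?_⟩
  · rintro ⟨jv, hj⟩
    cases jv with
    | zero =>
      have : pt σ ⟨0, hj⟩ = ffrac σ 0 := by
        simp only [pt, ee, Aacc]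
        norm_num [Aacc]
      rw [this]
      exact ⟨ffrac_pos σ hj, ffrac_lt_one σ hj⟩
    | succ k =>
      have hk : k < N := by omega
      have hval : pt σ ⟨k + 1, hj⟩ =
          ffrac σ (k + 1) - ffrac σ k + (if ffrac σ (k + 1) < ffrac σ k then 1 else 0) := by
        simp only [pt, ee, Aacc]
        norm_num [Aacc]
        push_cast
        ring
      have h1 := ffrac_pos σ hk
      have h2 := ffrac_lt_one σ hk
      have h3 := ffrac_pos σ (show k + 1 < N from hj)
      have h4 := ffrac_lt_one σ (show k + 1 < N from hj)
      by_cases h : ffrac σ (k + 1) < ffrac σ k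
      · rw [hval, if_pos h]
        constructor <;> [linarith; linarith]
      · have hne := ffrac_ne σ (show k + 1 < N from hj) hk (by omega)
        have h' : ffrac σ k < ffrac σ (k + 1) := lt_of_le_of_ne (not_lt.1 h) (Ne.symm hne)
        rw [hval, if_neg h]
        constructor <;> [linarith; linarith]
  · intro j
    rw [Ff_pt]
    exact ffrac_pos σ j.isLt
  · intro a b hab
    simp only [Ff_pt]
    have ha : ((σ a : Fin N) : ℕ) < N := (σ a).isLt
    have hb : ((σ b : Fin N) : ℕ) < N := (σ b).isLt
    rw [ffrac, dif_pos ha, ffrac, dif_pos hb]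
    have e1 : σ.symm ⟨((σ a : Fin N) : ℕ), ha⟩ = a := by
      rw [show (⟨((σ a : Fin N) : ℕ), ha⟩ : Fin N) = σ a from Fin.ext rfl]
      exact σ.symm_apply_apply a
    have e2 : σ.symm ⟨((σ b : Fin N) : ℕ), hb⟩ = b := by
      rw [show (⟨((σ b : Fin N) : ℕ), hb⟩ : Fin N) = σ b from Fin.ext rfl]
      exact σ.symm_apply_apply b
    rw [e1, e2]
    rw [div_lt_div_iff_of_pos_right (by positivity)]
    have h : (a : ℕ) < (b : ℕ) := hab
    exact_mod_cast by omega

lemma Cham_nonempty : (Cham σ).Nonempty := ⟨pt σ, pt_mem σ⟩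

end Nonempty

lemma card_components (N : ℕ) :
    Nat.card (ConnectedComponents (Sset N)) = Nat.factorial N := by
  classical
  set T := Sset N with hT
  let C' : Equiv.Perm (Fin N) → Set T := fun σ => Subtype.val ⁻¹' Cham σ
  have hmemT : ∀ σ, pt σ ∈ T := fun σ => Cham_subset σ (pt_mem σ)
  let P : Equiv.Perm (Fin N) → T := fun σ => ⟨pt σ, hmemT σ⟩
  have hPC : ∀ σ, P σ ∈ C' σ := fun σ => pt_mem σ
  have hopen : ∀ σ, IsOpen (C' σ) := fun σ => (Cham_open σ).preimage continuous_subtype_val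
  have hcover : ∀ z : T, ∃ σ, z ∈ C' σ := fun z => ⟨Tuple.sort (Ff z.val), mem_Cham_sort z.2⟩
  have hdisj : ∀ σ τ (z : T), z ∈ C' σ → z ∈ C' τ → σ = τ :=
    fun σ τ z h1 h2 => Cham_disjoint h1 h2
  have hclosed : ∀ σ, IsClosed (C' σ) := by
    intro σ
    have hEq : C' σ = (⋃ τ ∈ {τ : Equiv.Perm (Fin N) | τ ≠ σ}, C' τ)ᶜ := by
      ext z
      simp only [Set.mem_compl_iff, Set.mem_iUnion, not_exists, Set.mem_setOf_eq, exists_prop,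
        not_and]
      constructor
      · intro hz τ hτ hzτ
        exact hτ (hdisj τ σ z hzτ hz)
      · intro h
        obtain ⟨τ, hτ⟩ := hcover z
        rcases eq_or_ne τ σ with rfl | hne
        · exact hτ
        · exact absurd hτ (h τ hne)
    rw [hEq]
    exact (isOpen_biUnion fun τ _ => hopen τ).isClosed_compl
  have hconn : ∀ σ, IsPreconnected (C' σ) := by
    intro σ
    rw [← Topology.IsInducing.subtypeVal.isPreconnected_image]
    have himg : Subtype.val '' (C' σ) = Cham σ := by
      rw [Subtype.image_preimage_coe]
      exact Set.inter_eq_self_of_subset_right (Cham_subset σ)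
    rw [himg]
    exact (Cham_convex σ).isPreconnected
  let φ : Equiv.Perm (Fin N) → ConnectedComponents T := fun σ => ConnectedComponents.mk (P σ)
  have hbij : Function.Bijective φ := by
    constructor
    · intro σ τ h
      have h1 : P σ ∈ connectedComponent (P τ) := ConnectedComponents.coe_eq_coe'.1 h
      have h2 : connectedComponent (P τ) ⊆ C' τ :=
        IsClopen.connectedComponent_subset ⟨hclosed τ, hopen τ⟩ (hPC τ)
      exact hdisj σ τ (P σ) (hPC σ) (h2 h1)
    · intro c
      obtain ⟨z, rfl⟩ := ConnectedComponents.surjective_coe c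
      obtain ⟨σ, hσ⟩ := hcover z
      refine ⟨σ, ?_⟩
      exact ConnectedComponents.coe_eq_coe'.2
        (((hconn σ).subset_connectedComponent hσ) (hPC σ))
  calc Nat.card (ConnectedComponents T) = Nat.card (Equiv.Perm (Fin N)) :=
        (Nat.card_eq_of_bijective φ hbij).symm
    _ = Nat.factorial N := by
        rw [Nat.card_eq_fintype_card, Fintype.card_perm, Fintype.card_fin]

end Stmt17

/-- For `n ≥ 2` consider in `ℝ^{n-1}` the hyperplanes
`H_{r,s,m} = {x : x_r + ⋯ + x_s = m}` for `1 ≤ r ≤ s ≤ n-1` and `m ∈ ℤ`.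
Only finitely many of them meet the open cube `(0,1)^{n-1}`, and the complement
in `(0,1)^{n-1}` of their union has exactly `(n-1)!` connected components. -/
theorem stmt17 (n : ℕ) (hn : 2 ≤ n) :
    Set.Finite {p : Fin (n - 1) × Fin (n - 1) × ℤ | p.1 ≤ p.2.1 ∧
      ∃ x : Fin (n - 1) → ℝ, (∀ i, 0 < x i ∧ x i < 1) ∧
        (∑ i ∈ Finset.Icc p.1 p.2.1, x i) = p.2.2} ∧
    Nat.card (ConnectedComponents
      ({x : Fin (n - 1) → ℝ | (∀ i, 0 < x i ∧ x i < 1) ∧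
        ∀ r s : Fin (n - 1), r ≤ s → ∀ m : ℤ,
          (∑ i ∈ Finset.Icc r s, x i) ≠ m} : Set (Fin (n - 1) → ℝ))) =
      Nat.factorial (n - 1) := by
  constructor
  · apply Set.Finite.subset
      (((Set.finite_univ (α := Fin (n - 1))).prod
        ((Set.finite_univ (α := Fin (n - 1))).prod (Set.finite_Icc (0 : ℤ) (n - 1)))))
    rintro ⟨r, s, m⟩ ⟨hrs, x, hx, hsum⟩
    refine ⟨Set.mem_univ _, Set.mem_univ _, ?_⟩
    simp only [Set.mem_Icc]
    constructor
    · have h0 : (0 : ℝ) ≤ (m : ℝ) := by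
        rw [← hsum]
        exact Finset.sum_nonneg fun i _ => (hx i).1.le
      exact_mod_cast h0
    · have h1 : (m : ℝ) ≤ ((Finset.Icc r s).card : ℝ) := by
        rw [← hsum]
        calc (∑ i ∈ Finset.Icc r s, x i) ≤ ∑ _i ∈ Finset.Icc r s, (1 : ℝ) :=
              Finset.sum_le_sum fun i _ => (hx i).2.le
          _ = ((Finset.Icc r s).card : ℝ) := by simp
      have h2 : (Finset.Icc r s).card ≤ n - 1 := by
        calc (Finset.Icc r s).card ≤ Fintype.card (Fin (n - 1)) := Finset.card_le_univ _
          _ = n - 1 := Fintype.card_fin _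
      have h3 : (m : ℝ) ≤ ((n - 1 : ℕ) : ℝ) := h1.trans (by exact_mod_cast h2)
      have h4 : m ≤ ((n - 1 : ℕ) : ℤ) := by exact_mod_cast h3
      omega
  · exact Stmt17.card_components (n - 1)
end
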